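/- The map φ : M_k(G, ħ) → S'_k(G, f) defined by φ(v, 1_G, v) = [v] for v ∈ A^{≤k−1} and φ(u₁, g, u₂) = [u₁ w_g u₂] for u₁, u₂ ∈ A^k and g ∈ G (w_g ∈ A_G⁺ the chosen representative word of g, [·] the ρ_{R'}-class) is an injective semigroup homomorphism from M_k(G, ħ) into S'_k(G, f). -/

import Mathlib

open List

variable {A : Type*} {G : Type*} {A_G : Type*}

/-- `L̈`: the words not in `L` whose maximal proper prefix and suffix are in `L`. -/
def Ddot (L : Set (List A)) : Set (List A) :=
  {v | v ∉ L ∧ v.dropLast ∈ L ∧ v.tail ∈ L}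

/-- `IsSc L w s` : `s` is the sequence of coordinates of `w` determined by `L`,
via the recursive construction of the paper: if `w ∈ L` then `s = (w)`; otherwise
select an occurrence `w = w' v w''` of a factor `v ∈ L̈` and put
`s = sc_L[w' v_α] (v) sc_L[v_ω w'']`. -/
inductive IsSc (L : Set (List A)) : List A → List (List A) → Prop
  | base (w : List A) (hw : w ∈ L) : IsSc L w [w]
  | step (w' w'' v : List A) (s₁ s₂ : List (List A)) (hv : v ∈ Ddot L)
      (h₁ : IsSc L (w' ++ v.dropLast) s₁) (h₂ : IsSc L (v.tail ++ w'') s₂) :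
      IsSc L (w' ++ v ++ w'') (s₁ ++ v :: s₂)

open Classical in
/-- `sc_L[w]`, the sequence of coordinates of `w` determined by `L`. -/
noncomputable def scL (L : Set (List A)) (w : List A) : List (List A) :=
  if h : ∃ s, IsSc L w s then h.choose else []
section CoreG
variable [Group G]

/-- Evaluation of a word over `A_G` in the group `G`. -/
def evalW (evA : A_G → G) (u : List A_G) : G := (u.map evA).prod

/-- `f̂ : A* → G`. -/
noncomputable def fhat (L : Set (List A)) (f : List A → G) (w : List A) : G :=
  ((scL L w).map f).prod

/-- first coordinate (word part of `f̀`). -/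
noncomputable def graveWord (L : Set (List A)) (w : List A) : List A :=
  (scL L w).headI

/-- group part of `f̀`. -/
noncomputable def graveG (L : Set (List A)) (f : List A → G) (w : List A) : G :=
  ((scL L w).tail.map f).prod

/-- last coordinate (word part of `f́`). -/
noncomputable def acuteWord (L : Set (List A)) (w : List A) : List A :=
  (scL L w).getLastD []

/-- group part of `f́`. -/
noncomputable def acuteG (L : Set (List A)) (f : List A → G) (w : List A) : G :=
  ((scL L w).dropLast.map f).prod

/-- The word over `X = A ⊕ A_G` determined by a coordinate sequence:
`w₀ f(ẅ₁)f(w₁)⋯f(ẅ_m) w_m`, the middle group element written as its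
chosen representative word over `A_G`. -/
def checkOfSeq (f : List A → G) (rep : G → List A_G) :
    List (List A) → List (A ⊕ A_G)
  | [] => []
  | [w] => w.map Sum.inl
  | w :: rest =>
      w.map Sum.inl ++ (rep ((rest.dropLast.map f).prod)).map Sum.inr ++
        (rest.getLastD []).map Sum.inl

/-- longest prefix of `A`-letters. -/
def takeA : List (A ⊕ A_G) → List A
  | Sum.inl a :: r => a :: takeA r
  | _ => []

def dropA : List (A ⊕ A_G) → List (A ⊕ A_G)
  | Sum.inl _ :: r => dropA r
  | w => w

/-- longest prefix of `A_G`-letters. -/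
def takeG : List (A ⊕ A_G) → List A_G
  | Sum.inr b :: r => b :: takeG r
  | _ => []

def dropG : List (A ⊕ A_G) → List (A ⊕ A_G)
  | Sum.inr _ :: r => dropG r
  | w => w

/-- Processing of the part `g₁u₁g₂u₂⋯g_nu_n` of a mixed word: returns the group
element `eval(g₁)·f̂(u₁)·…·eval(g_n)·(acute part of u_n)` together with the final
word coordinate of `u_n`.  (Fuel-based recursion.) -/
noncomputable def midRunAux (L : Set (List A)) (f : List A → G) (evA : A_G → G) :
    ℕ → List (A ⊕ A_G) → G × List A
  | 0, _ => (1, [])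
  | n + 1, w =>
      match dropA (dropG w) with
      | [] => (evalW evA (takeG w) * acuteG L f (takeA (dropG w)),
               acuteWord L (takeA (dropG w)))
      | r' => (evalW evA (takeG w) * fhat L f (takeA (dropG w)) *
                 (midRunAux L f evA n r').1,
               (midRunAux L f evA n r').2)

/-- The extension `f̌ : X⁺ → Z ⊆ X⁺` of `f̌` to mixed words
(`f̌(u₀g₁u₁⋯g_nu_n) = f̀(u₀) g₁ f̂(u₁) ⋯ g_n f́(u_n)`, the middle group
element written as its representative word). -/
noncomputable def fcheckX (L : Set (List A)) (f : List A → G) (evA : A_G → G)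
    (rep : G → List A_G) (w : List (A ⊕ A_G)) : List (A ⊕ A_G) :=
  match dropA w with
  | [] => checkOfSeq f rep (scL L (takeA w))
  | r =>
      (graveWord L (takeA w)).map Sum.inl ++
        (rep (graveG L f (takeA w) * (midRunAux L f evA r.length r).1)).map Sum.inr ++
        (midRunAux L f evA r.length r).2.map Sum.inl

end CoreG
/-- The smallest (semigroup) congruence on words containing the relation `R`. -/
inductive Cong {X : Type*} (R : List X → List X → Prop) : List X → List X → Prop
  | of {u v : List X} : R u v → Cong R u v
  | refl (u : List X) : Cong R u u
  | symm {u v : List X} : Cong R u v → Cong R v u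
  | trans {u v w : List X} : Cong R u v → Cong R v w → Cong R u w
  | left (w : List X) {u v : List X} : Cong R u v → Cong R (w ++ u) (w ++ v)
  | right (w : List X) {u v : List X} : Cong R u v → Cong R (u ++ w) (v ++ w)

section CoreRel
variable [Group G]

/-- The relation `R = R_G ∪ R_f` over `X = A ⊕ A_G`, where
`R_f = {eue = f(u) : u ∈ L} ∪ {v̈ = v̈_α f(v̈) v̈_ω : v̈ ∈ L̈}`,
`e = rep 1` the chosen word representing `1_G`, group elements
read as their representative words. -/
inductive RelR (L : Set (List A)) (RG : List A_G → List A_G → Prop)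
    (f : List A → G) (rep : G → List A_G) :
    List (A ⊕ A_G) → List (A ⊕ A_G) → Prop
  | ofG {u v : List A_G} : RG u v → RelR L RG f rep (u.map Sum.inr) (v.map Sum.inr)
  | rU {u : List A} (hu : u ∈ L) :
      RelR L RG f rep
        ((rep 1).map Sum.inr ++ u.map Sum.inl ++ (rep 1).map Sum.inr)
        ((rep (f u)).map Sum.inr)
  | rV {v : List A} (hv : v ∈ Ddot L) :
      RelR L RG f rep (v.map Sum.inl)
        (v.dropLast.map Sum.inl ++ (rep (f v)).map Sum.inr ++ v.tail.map Sum.inl)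

end CoreRel

/-- `L_k = A^{≤k}`: the (factorial) language of all non-empty words over `A` of
length at most `k`. -/
def Lk (A : Type*) (k : ℕ) : Set (List A) := {w | w ≠ [] ∧ w.length ≤ k}

section UEUsec
variable [Group G]

/-- The extra relations `u = ueu` (`u ∈ A^k`), `e = rep 1` the chosen word
representing `1_G`. -/
def UEU (k : ℕ) (rep : G → List A_G) :
    List (A ⊕ A_G) → List (A ⊕ A_G) → Prop := fun y w =>
  ∃ u : List A, u.length = k ∧ y = u.map Sum.inl ∧
    w = u.map Sum.inl ++ (rep (1 : G)).map Sum.inr ++ u.map Sum.inl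

/-- The relation `R' = R_G ∪ R_f ∪ {u = ueu : u ∈ A^k}`. -/
def RelR' (L : Set (List A)) (RG : List A_G → List A_G → Prop)
    (f : List A → G) (rep : G → List A_G) (k : ℕ) :
    List (A ⊕ A_G) → List (A ⊕ A_G) → Prop := fun y w =>
  RelR L RG f rep y w ∨ UEU k rep y w

end UEUsec

section Stmt16
variable [Group G]

/-- The carrier of `M_k(G, ħ) = {(v, 1_G, v) : v ∈ A^{≤k−1}} ∪ (A^k × G × A^k)`. -/
def memM (k : ℕ) (p : List A × G × List A) : Prop :=
  (p.2.1 = 1 ∧ p.2.2 = p.1 ∧ p.1 ≠ [] ∧ p.1.length ≤ k - 1) ∨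
  (p.1.length = k ∧ p.2.2.length = k)

/-- Multiplication of `M_k(G, ħ)`:
`(u, g, v)(u', g', v') = (i_k(uu'), g·ħ(vu')·g', t_k(vv'))`, where `i_k`
(resp. `t_k`) is the longest prefix (resp. suffix) of length at most `k`. -/
def mulM (k : ℕ) (hb : List A → G) (p q : List A × G × List A) :
    List A × G × List A :=
  ((p.1 ++ q.1).take k,
   p.2.1 * hb (p.2.2 ++ q.1) * q.2.1,
   (p.2.2 ++ q.2.2).drop ((p.2.2 ++ q.2.2).length - k))

/-- The map `φ : M_k(G, ħ) → S'_k(G, f)`: `φ(v, 1_G, v) = [v]` for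
`v ∈ A^{≤k−1}` and `φ(u₁, g, u₂) = [u₁ w_g u₂]` for `u₁, u₂ ∈ A^k`, `g ∈ G`
(`w_g = rep g` the chosen representative word of `g`), described on word
representatives. -/
def phiWord (k : ℕ) (rep : G → List A_G) (p : List A × G × List A) :
    List (A ⊕ A_G) :=
  if p.1.length < k then p.1.map Sum.inl
  else p.1.map Sum.inl ++ (rep p.2.1).map Sum.inr ++ p.2.2.map Sum.inl

end Stmt16


namespace SSS
variable {A : Type*} {G : Type*} [Group G]

theorem itk_lem (k : ℕ) (a b : List A) : (a ++ b.take k).take k = (a ++ b).take k := by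
  simp [List.take_append, List.take_take]

theorem ttk_lem (k : ℕ) (a b : List A) :
    ((a.drop (a.length - k)) ++ b).drop ((a.drop (a.length - k) ++ b).length - k)
      = (a ++ b).drop ((a ++ b).length - k) := by
  have h : ∀ x : List A, x.drop (x.length - k) = (x.reverse.take k).reverse := by
    intro x; rw [← List.rtake_eq_reverse_take_reverse]; rfl
  rw [h, h, h, List.reverse_append, List.reverse_append, List.reverse_reverse, itk_lem]

theorem take_long (k : ℕ) {a : List A} (b : List A) (h : k ≤ a.length) :
    (a ++ b).take k = a.take k := List.take_append_of_le_length h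

theorem drop_long (k : ℕ) (a : List A) {b : List A} (h : k ≤ b.length) :
    (a ++ b).drop ((a ++ b).length - k) = b.drop (b.length - k) := by
  rw [List.drop_append]
  have h1 : a.drop ((a ++ b).length - k) = [] := by
    apply List.drop_eq_nil_of_le; simp; omega
  rw [h1]; simp; congr 1; omega

variable (k : ℕ) (hb : List A → G)

theorem hbA1 (hb1 : ∀ w : List A, w.length ≤ k → hb w = 1)
    (hb2 : ∀ u v : List A, u ≠ [] → v ≠ [] →
      hb (u ++ v) = hb u * hb (u.drop (u.length - k) ++ v) ∧
      hb (u ++ v) = hb (u ++ v.take k) * hb v)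
    (u v : List A) : hb (u ++ v) = hb u * hb (u.drop (u.length - k) ++ v) := by
  rcases eq_or_ne u [] with rfl | hu
  · simp [hb1 [] (by simp)]
  rcases eq_or_ne v [] with rfl | hv
  · have : hb (u.drop (u.length - k)) = 1 := hb1 _ (by simp; omega)
    simp [this]
  · exact (hb2 u v hu hv).1

theorem hbA2 (hb1 : ∀ w : List A, w.length ≤ k → hb w = 1)
    (hb2 : ∀ u v : List A, u ≠ [] → v ≠ [] →
      hb (u ++ v) = hb u * hb (u.drop (u.length - k) ++ v) ∧
      hb (u ++ v) = hb (u ++ v.take k) * hb v)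
    (u v : List A) : hb (u ++ v) = hb (u ++ v.take k) * hb v := by
  rcases eq_or_ne v [] with rfl | hv
  · simp [hb1 [] (by simp)]
  rcases eq_or_ne u [] with rfl | hu
  · have : hb (v.take k) = 1 := hb1 _ (by simp)
    simp [this]
  · exact (hb2 u v hu hv).2

/-- The auxiliary semigroup used as invariant target. -/
def sstar : (List A ⊕ List A × G × List A) → (List A ⊕ List A × G × List A) →
    (List A ⊕ List A × G × List A)
  | .inl w, .inl w' =>
      if (w ++ w').length < k then .inl (w ++ w')
      else .inr ((w ++ w').take k, hb (w ++ w'),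
        (w ++ w').drop ((w ++ w').length - k))
  | .inl w, .inr (u, g, v) => .inr ((w ++ u).take k, hb (w ++ u) * g, v)
  | .inr (u, g, v), .inl w =>
      .inr (u, g * hb (v ++ w), (v ++ w).drop ((v ++ w).length - k))
  | .inr (u, g, v), .inr (u', g', v') => .inr (u, g * hb (v ++ u') * g', v')

end SSS

namespace SSS2
open SSS
variable {A : Type*} {G : Type*} [Group G]
variable (k : ℕ) (hb : List A → G)
variable (hb1 : ∀ w : List A, w.length ≤ k → hb w = 1)
variable (hb2 : ∀ u v : List A, u ≠ [] → v ≠ [] →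
      hb (u ++ v) = hb u * hb (u.drop (u.length - k) ++ v) ∧
      hb (u ++ v) = hb (u ++ v.take k) * hb v)

include hb1 hb2 in
theorem sstar_assoc (x y z : List A ⊕ List A × G × List A) :
    sstar k hb (sstar k hb x y) z = sstar k hb x (sstar k hb y z) := by
  have A1 := hbA1 k hb hb1 hb2
  have A2 := hbA2 k hb hb1 hb2
  rcases x with w | ⟨u, g, v⟩ <;> rcases y with w' | ⟨u', g', v'⟩ <;>
    rcases z with w'' | ⟨u'', g'', v''⟩
  · -- inl inl inl
    by_cases c1 : (w ++ w').length < k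
    · by_cases c2 : (w' ++ w'').length < k
      · simp only [sstar, if_pos c1, if_pos c2, List.append_assoc]
      · have c3 : ¬ (w ++ w' ++ w'').length < k := by
          simp only [List.length_append] at *; omega
        have c3' : ¬ (w ++ (w' ++ w'')).length < k := by
          simpa [List.append_assoc] using c3
        simp only [sstar, if_pos c1, if_pos c2, if_neg c2, if_neg c3, if_neg c3']
        refine congrArg _ (Prod.ext ?_ (Prod.ext ?_ ?_)) <;> simp only
        · rw [itk_lem, List.append_assoc]
        · rw [← A2, List.append_assoc]
        · rw [List.append_assoc w w' w'', drop_long k w (by omega)]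
    · have c3 : ¬ (w ++ w' ++ w'').length < k := by
        simp only [List.length_append] at *; omega
      have c3' : ¬ (w ++ (w' ++ w'')).length < k := by
        simpa [List.append_assoc] using c3
      by_cases c2 : (w' ++ w'').length < k
      · simp only [sstar, if_neg c1, if_pos c2, if_neg c3']
        refine congrArg _ (Prod.ext ?_ (Prod.ext ?_ ?_)) <;> simp only
        · rw [← List.append_assoc, take_long k w'' (by omega)]
        · rw [← A1, List.append_assoc]
        · rw [ttk_lem, List.append_assoc]
      · simp only [sstar, if_neg c1, if_neg c2]
        refine congrArg _ (Prod.ext ?_ (Prod.ext ?_ ?_)) <;> simp only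
        · rw [itk_lem, ← List.append_assoc, take_long k w'' (by omega)]
        · rw [← A1, ← A2, List.append_assoc]
        · rw [ttk_lem, List.append_assoc w w' w'', drop_long k w (by omega)]
  · -- inl inl inr
    by_cases c1 : (w ++ w').length < k
    · simp only [sstar, if_pos c1]
      refine congrArg _ (Prod.ext ?_ (Prod.ext ?_ rfl)) <;> simp only
      · rw [itk_lem, List.append_assoc]
      · rw [← mul_assoc, ← A2, List.append_assoc]
    · simp only [sstar, if_neg c1]
      refine congrArg _ (Prod.ext ?_ (Prod.ext ?_ rfl)) <;> simp only
      · rw [itk_lem, ← List.append_assoc, take_long k u'' (by omega)]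
      · rw [← A1, ← mul_assoc, ← A2, List.append_assoc]
  · -- inl inr inl
    simp only [sstar]
    refine congrArg _ (Prod.ext rfl (Prod.ext ?_ rfl))
    simp only [mul_assoc]
  · -- inl inr inr
    simp only [sstar]
    refine congrArg _ (Prod.ext rfl (Prod.ext ?_ rfl))
    simp only [mul_assoc]
  · -- inr inl inl
    by_cases c2 : (w' ++ w'').length < k
    · simp only [sstar, if_pos c2]
      refine congrArg _ (Prod.ext rfl (Prod.ext ?_ ?_)) <;> simp only
      · rw [mul_assoc, ← A1, List.append_assoc]
      · rw [ttk_lem, List.append_assoc]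
    · simp only [sstar, if_neg c2]
      refine congrArg _ (Prod.ext rfl (Prod.ext ?_ ?_)) <;> simp only
      · rw [mul_assoc, ← A1, mul_assoc, ← A2, List.append_assoc]
      · rw [ttk_lem, List.append_assoc v w' w'', drop_long k v (by omega)]
  · -- inr inl inr
    simp only [sstar]
    refine congrArg _ (Prod.ext rfl (Prod.ext ?_ rfl))
    simp only [mul_assoc]
    rw [← mul_assoc (hb (v ++ w')), ← A1,
      ← mul_assoc (hb (v ++ (w' ++ u'').take k)), ← A2, List.append_assoc]
  · -- inr inr inl
    simp only [sstar]
    refine congrArg _ (Prod.ext rfl (Prod.ext ?_ rfl))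
    simp only [mul_assoc]
  · -- inr inr inr
    simp only [sstar]
    refine congrArg _ (Prod.ext rfl (Prod.ext ?_ rfl))
    simp only [mul_assoc]

end SSS2
section CongBasics
variable {X : Type*} {R : List X → List X → Prop}

theorem Cong.appendCong {a b c d : List X} (h1 : Cong R a b) (h2 : Cong R c d) :
    Cong R (a ++ c) (b ++ d) :=
  (Cong.right c h1).trans (Cong.left b h2)

theorem Cong.mid (x y : List X) {u v : List X} (h : Cong R u v) :
    Cong R (x ++ u ++ y) (x ++ v ++ y) :=
  Cong.right y (Cong.left x h)

theorem Cong.congr {a b a' b' : List X} (ha : a = a') (hb : b = b')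
    (h : Cong R a' b') : Cong R a b := ha ▸ hb ▸ h

end CongBasics

section CongLems
variable {A : Type*} {G : Type*} {A_G : Type*} [Group G]
variable {k : ℕ} {RG : List A_G → List A_G → Prop} {evA : A_G → G}
variable {rep : G → List A_G} {hb : List A → G}

/-- notation shortcuts -/
abbrev wA (u : List A) : List (A ⊕ A_G) := u.map Sum.inl
abbrev wG (u : List A_G) : List (A ⊕ A_G) := u.map Sum.inr

theorem evalW_append (u v : List A_G) :
    evalW evA (u ++ v) = evalW evA u * evalW evA v := by
  simp [evalW]

theorem cong_mapInr {u v : List A_G} (h : Cong RG u v) :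
    Cong (RelR' (Lk A k) RG hb rep k) (wG u) (wG v) := by
  induction h with
  | of h => exact Cong.of (Or.inl (RelR.ofG h))
  | refl u => exact Cong.refl _
  | symm _ ih => exact ih.symm
  | trans _ _ ih1 ih2 => exact ih1.trans ih2
  | left w _ ih => exact Cong.congr (by simp [wG]) (by simp [wG]) (Cong.left (w.map Sum.inr) ih)
  | right w _ ih => exact Cong.congr (by simp [wG]) (by simp [wG]) (Cong.right (w.map Sum.inr) ih)

variable (hpres : ∀ u v : List A_G, u ≠ [] → v ≠ [] →
      (Cong RG u v ↔ evalW evA u = evalW evA v))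

include hpres in
theorem cong_eval {u v : List A_G} (hu : u ≠ []) (hv : v ≠ [])
    (h : evalW evA u = evalW evA v) :
    Cong (RelR' (Lk A k) RG hb rep k) (wG u) (wG v) :=
  cong_mapInr ((hpres u v hu hv).2 h)

variable (hrepne : ∀ g : G, rep g ≠ []) (hrep : ∀ g : G, evalW evA (rep g) = g)

include hpres hrepne hrep in
theorem cong_repe_r (g : G) :
    Cong (RelR' (Lk A k) RG hb rep k) (wG (rep g)) (wG (rep g) ++ wG (rep 1)) := by
  have : (wG (rep g) ++ wG (rep 1) : List (A ⊕ A_G)) = wG (rep g ++ rep 1) := by simp [wG]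
  rw [this]
  exact cong_eval hpres (hrepne g) (by simp [hrepne]) (by simp [evalW_append, hrep])

include hpres hrepne hrep in
theorem cong_repe_l (g : G) :
    Cong (RelR' (Lk A k) RG hb rep k) (wG (rep g)) (wG (rep 1) ++ wG (rep g)) := by
  have : (wG (rep 1) ++ wG (rep g) : List (A ⊕ A_G)) = wG (rep 1 ++ rep g) := by simp [wG]
  rw [this]
  exact cong_eval hpres (hrepne g) (by simp [hrepne]) (by simp [evalW_append, hrep])

include hpres hrepne hrep in
theorem cong_rep_mul3 (g g' g'' : G) :
    Cong (RelR' (Lk A k) RG hb rep k) (wG (rep g) ++ wG (rep g') ++ wG (rep g''))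
      (wG (rep (g * g' * g''))) := by
  have : (wG (rep g) ++ wG (rep g') ++ wG (rep g'') : List (A ⊕ A_G)) = wG (rep g ++ rep g' ++ rep g'') := by
    simp [wG]
  rw [this]
  exact cong_eval hpres (by simp [hrepne]) (hrepne _) (by simp [evalW_append, hrep, mul_assoc])

end CongLems

section CongLems2
variable {A : Type*} {G : Type*} {A_G : Type*} [Group G]
variable {k : ℕ} {RG : List A_G → List A_G → Prop} {evA : A_G → G}
variable {rep : G → List A_G} {hb : List A → G}
variable (hpres : ∀ u v : List A_G, u ≠ [] → v ≠ [] →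
      (Cong RG u v ↔ evalW evA u = evalW evA v))
variable (hrepne : ∀ g : G, rep g ≠ []) (hrep : ∀ g : G, evalW evA (rep g) = g)
variable (hk : 1 ≤ k)
variable (hb1 : ∀ w : List A, w.length ≤ k → hb w = 1)
variable (hb2 : ∀ u v : List A, u ≠ [] → v ≠ [] →
      hb (u ++ v) = hb u * hb (u.drop (u.length - k) ++ v) ∧
      hb (u ++ v) = hb (u ++ v.take k) * hb v)

theorem Cong.midA {X : Type*} {R : List X → List X → Prop} {a b : List X}
    (x y : List X) {u v : List X} (h : Cong R u v)
    (ha : a = x ++ u ++ y) (hbb : b = x ++ v ++ y) : Cong R a b :=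
  Cong.congr ha hbb (Cong.mid x y h)

include hk in
theorem take_ddot {w : List A} (hw : k < w.length) :
    w.take (k+1) ∈ Ddot (Lk A k) := by
  have h1 : (w.take (k+1)).length = k + 1 := by
    simp; omega
  refine ⟨?_, ⟨?_, ?_⟩, ⟨?_, ?_⟩⟩
  · rintro ⟨-, hl⟩; omega
  · intro hnil
    have := congrArg List.length hnil
    simp [h1] at this; omega
  · simp [h1]
  · intro hnil
    have := congrArg List.length hnil
    simp [h1] at this; omega
  · simp [h1]

include hpres hrepne hrep hk hb1 hb2 in
theorem congEUE :
    ∀ n (w : List A), w.length ≤ n → w ≠ [] →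
      Cong (RelR' (Lk A k) RG hb rep k)
        (wG (rep 1) ++ wA w ++ wG (rep 1)) (wG (rep (hb w))) := by
  intro n
  induction n with
  | zero =>
    intro w h hne
    exact absurd (List.eq_nil_of_length_eq_zero (by omega)) hne
  | succ n ih =>
    intro w hlen hne
    by_cases hwk : w.length ≤ k
    · exact Cong.of (Or.inl (RelR.rU ⟨hne, hwk⟩))
    push_neg at hwk
    set v := w.take (k+1) with hv
    set w'' := w.drop (k+1) with hw''
    have hvlen : v.length = k + 1 := by simp [hv]; omega
    have hsplit : w = v ++ w'' := (List.take_append_drop _ _).symm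
    have hdl : v.dropLast.length = k := by simp [hvlen]
    have htl : v.tail.length = k := by simp [hvlen]
    have hdlne : v.dropLast ≠ [] := by
      intro h; have := congrArg List.length h; simp [hdl] at this; omega
    have htlne : v.tail ≠ [] := by
      intro h; have := congrArg List.length h; simp [htl] at this; omega
    have rv : Cong (RelR' (Lk A k) RG hb rep k) (wA v)
        (wA v.dropLast ++ wG (rep (hb v)) ++ wA v.tail) :=
      Cong.of (Or.inl (RelR.rV (take_ddot hk hwk)))
    have h1 : Cong (RelR' (Lk A k) RG hb rep k)
        (wG (rep 1) ++ wA w ++ wG (rep 1))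
        (wG (rep 1) ++ (wA v.dropLast ++ (wG (rep (hb v)) ++
          (wA v.tail ++ (wA w'' ++ wG (rep 1)))))) :=
      Cong.midA (wG (rep 1)) (wA w'' ++ wG (rep 1)) rv
        (by rw [hsplit]; simp [List.append_assoc]) (by simp [List.append_assoc])
    have h2 : Cong (RelR' (Lk A k) RG hb rep k)
        (wG (rep 1) ++ (wA v.dropLast ++ (wG (rep (hb v)) ++
          (wA v.tail ++ (wA w'' ++ wG (rep 1))))))
        (wG (rep 1) ++ (wA v.dropLast ++ (wG (rep (hb v)) ++
          (wG (rep 1) ++ (wA v.tail ++ (wA w'' ++ wG (rep 1))))))) :=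
      Cong.midA (wG (rep 1) ++ wA v.dropLast) (wA v.tail ++ wA w'' ++ wG (rep 1))
        (cong_repe_r hpres hrepne hrep (hb v))
        (by simp [List.append_assoc]) (by simp [List.append_assoc])
    have h3 : Cong (RelR' (Lk A k) RG hb rep k)
        (wG (rep 1) ++ (wA v.dropLast ++ (wG (rep (hb v)) ++
          (wG (rep 1) ++ (wA v.tail ++ (wA w'' ++ wG (rep 1)))))))
        (wG (rep 1) ++ (wA v.dropLast ++ (wG (rep (hb v)) ++
          wG (rep (hb (v.tail ++ w'')))))) := by
      have hlen2 : (v.tail ++ w'').length ≤ n := by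
        simp only [List.length_append, htl]
        have : w''.length = w.length - (k+1) := by simp [hw'']
        omega
      have := ih (v.tail ++ w'') hlen2 (by simp [htlne])
      exact Cong.midA (wG (rep 1) ++ wA v.dropLast ++ wG (rep (hb v))) [] this
        (by simp [List.append_assoc]) (by simp [List.append_assoc])
    have h4 : Cong (RelR' (Lk A k) RG hb rep k)
        (wG (rep 1) ++ (wA v.dropLast ++ (wG (rep (hb v)) ++
          wG (rep (hb (v.tail ++ w''))))))
        (wG (rep 1) ++ (wA v.dropLast ++ (wG (rep 1) ++ (wG (rep (hb v)) ++
          wG (rep (hb (v.tail ++ w''))))))) :=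
      Cong.midA (wG (rep 1) ++ wA v.dropLast) (wG (rep (hb (v.tail ++ w''))))
        (cong_repe_l hpres hrepne hrep (hb v))
        (by simp [List.append_assoc]) (by simp [List.append_assoc])
    have h5 : Cong (RelR' (Lk A k) RG hb rep k)
        (wG (rep 1) ++ (wA v.dropLast ++ (wG (rep 1) ++ (wG (rep (hb v)) ++
          wG (rep (hb (v.tail ++ w'')))))))
        (wG (rep (hb v.dropLast)) ++ (wG (rep (hb v)) ++
          wG (rep (hb (v.tail ++ w''))))) :=
      Cong.midA [] (wG (rep (hb v)) ++ wG (rep (hb (v.tail ++ w''))))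
        (Cong.of (Or.inl (RelR.rU ⟨hdlne, by rw [hdl]⟩)))
        (by simp [List.append_assoc]) (by simp [List.append_assoc])
    have h6 : Cong (RelR' (Lk A k) RG hb rep k)
        (wG (rep (hb v.dropLast)) ++ (wG (rep (hb v)) ++
          wG (rep (hb (v.tail ++ w'')))))
        (wG (rep (hb v.dropLast * hb v * hb (v.tail ++ w'')))) :=
      Cong.congr (by simp [List.append_assoc]) rfl
        (cong_rep_mul3 hpres hrepne hrep _ _ _)
    have heq : hb v.dropLast * hb v * hb (v.tail ++ w'') = hb w := by
      have h' := SSS.hbA1 k hb hb1 hb2 v w''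
      have hne1 : v.length - k = 1 := by omega
      rw [hne1, List.drop_one] at h'
      rw [hb1 v.dropLast (by rw [hdl]), one_mul, ← h', ← hsplit]
    rw [heq] at h6
    exact ((((h1.trans h2).trans h3).trans h4).trans h5).trans h6

include hpres hrepne hrep hk hb1 hb2 in
theorem congH (m : List A) (g g' : G) (hm : m ≠ []) :
    Cong (RelR' (Lk A k) RG hb rep k)
      (wG (rep g) ++ wA m ++ wG (rep g')) (wG (rep (g * hb m * g'))) := by
  have h1 : Cong (RelR' (Lk A k) RG hb rep k)
      (wG (rep g) ++ wA m ++ wG (rep g'))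
      (wG (rep g) ++ (wG (rep 1) ++ (wA m ++ wG (rep g')))) :=
    Cong.midA [] (wA m ++ wG (rep g')) (cong_repe_r hpres hrepne hrep g)
      (by simp [List.append_assoc]) (by simp [List.append_assoc])
  have h2 : Cong (RelR' (Lk A k) RG hb rep k)
      (wG (rep g) ++ (wG (rep 1) ++ (wA m ++ wG (rep g'))))
      (wG (rep g) ++ (wG (rep 1) ++ (wA m ++ (wG (rep 1) ++ wG (rep g'))))) :=
    Cong.midA (wG (rep g) ++ wG (rep 1) ++ wA m) []
      (cong_repe_l hpres hrepne hrep g')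
      (by simp [List.append_assoc]) (by simp [List.append_assoc])
  have h3 : Cong (RelR' (Lk A k) RG hb rep k)
      (wG (rep g) ++ (wG (rep 1) ++ (wA m ++ (wG (rep 1) ++ wG (rep g')))))
      (wG (rep g) ++ (wG (rep (hb m)) ++ wG (rep g'))) :=
    Cong.midA (wG (rep g)) (wG (rep g'))
      (congEUE hpres hrepne hrep hk hb1 hb2 m.length m le_rfl hm)
      (by simp [List.append_assoc]) (by simp [List.append_assoc])
  have h4 : Cong (RelR' (Lk A k) RG hb rep k)
      (wG (rep g) ++ (wG (rep (hb m)) ++ wG (rep g')))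
      (wG (rep (g * hb m * g'))) :=
    Cong.congr (by simp [List.append_assoc]) rfl
      (cong_rep_mul3 hpres hrepne hrep _ _ _)
  exact ((h1.trans h2).trans h3).trans h4

include hpres hrepne hrep hk hb1 hb2 in
theorem congF (m : List A) (g : G) (hm : k ≤ m.length) :
    Cong (RelR' (Lk A k) RG hb rep k)
      (wA m ++ wG (rep g)) (wA (m.take k) ++ wG (rep (hb m * g))) := by
  rcases eq_or_lt_of_le hm with heq | hlt
  · have htk : m.take k = m := List.take_of_length_le (by omega)
    have hg : hb m * g = g := by rw [hb1 m (by omega), one_mul]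
    rw [htk, hg]
    exact Cong.refl _
  · set v := m.take (k+1) with hv
    set m'' := m.drop (k+1) with hm''
    have hvlen : v.length = k + 1 := by simp [hv]; omega
    have hsplit : m = v ++ m'' := (List.take_append_drop _ _).symm
    have hdl : v.dropLast.length = k := by simp [hvlen]
    have htl : v.tail.length = k := by simp [hvlen]
    have htlne : v.tail ≠ [] := by
      intro h; have := congrArg List.length h; simp [htl] at this; omega
    have rv : Cong (RelR' (Lk A k) RG hb rep k) (wA v)
        (wA v.dropLast ++ wG (rep (hb v)) ++ wA v.tail) :=
      Cong.of (Or.inl (RelR.rV (take_ddot hk hlt)))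
    have h1 : Cong (RelR' (Lk A k) RG hb rep k)
        (wA m ++ wG (rep g))
        (wA v.dropLast ++ (wG (rep (hb v)) ++ (wA v.tail ++ (wA m'' ++ wG (rep g))))) :=
      Cong.midA [] (wA m'' ++ wG (rep g)) rv
        (by rw [hsplit]; simp [List.append_assoc]) (by simp [List.append_assoc])
    have h2 : Cong (RelR' (Lk A k) RG hb rep k)
        (wA v.dropLast ++ (wG (rep (hb v)) ++ (wA v.tail ++ (wA m'' ++ wG (rep g)))))
        (wA v.dropLast ++ (wG (rep (hb v)) ++ (wG (rep 1) ++
          (wA v.tail ++ (wA m'' ++ wG (rep g)))))) :=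
      Cong.midA (wA v.dropLast) (wA v.tail ++ wA m'' ++ wG (rep g))
        (cong_repe_r hpres hrepne hrep (hb v))
        (by simp [List.append_assoc]) (by simp [List.append_assoc])
    have h3 : Cong (RelR' (Lk A k) RG hb rep k)
        (wA v.dropLast ++ (wG (rep (hb v)) ++ (wG (rep 1) ++
          (wA v.tail ++ (wA m'' ++ wG (rep g))))))
        (wA v.dropLast ++ (wG (rep (hb v)) ++ (wG (rep 1) ++
          (wA v.tail ++ (wA m'' ++ (wG (rep 1) ++ wG (rep g))))))) :=
      Cong.midA (wA v.dropLast ++ wG (rep (hb v)) ++ wG (rep 1) ++ wA v.tail ++ wA m'') []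
        (cong_repe_l hpres hrepne hrep g)
        (by simp [List.append_assoc]) (by simp [List.append_assoc])
    have h4 : Cong (RelR' (Lk A k) RG hb rep k)
        (wA v.dropLast ++ (wG (rep (hb v)) ++ (wG (rep 1) ++
          (wA v.tail ++ (wA m'' ++ (wG (rep 1) ++ wG (rep g)))))))
        (wA v.dropLast ++ (wG (rep (hb v)) ++ (wG (rep (hb (v.tail ++ m''))) ++
          wG (rep g)))) :=
      Cong.midA (wA v.dropLast ++ wG (rep (hb v))) (wG (rep g))
        (congEUE hpres hrepne hrep hk hb1 hb2 (v.tail ++ m'').length _ le_rfl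
          (by simp [htlne]))
        (by simp [List.append_assoc]) (by simp [List.append_assoc])
    have h5 : Cong (RelR' (Lk A k) RG hb rep k)
        (wA v.dropLast ++ (wG (rep (hb v)) ++ (wG (rep (hb (v.tail ++ m''))) ++
          wG (rep g))))
        (wA v.dropLast ++ wG (rep (hb v * hb (v.tail ++ m'') * g))) :=
      Cong.midA (wA v.dropLast) []
        (cong_rep_mul3 hpres hrepne hrep (hb v) (hb (v.tail ++ m'')) g)
        (by simp [List.append_assoc]) (by simp [List.append_assoc])
    have hdlt : v.dropLast = m.take k := by
      rw [List.dropLast_eq_take, hvlen]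
      simp [hv, List.take_take]
    have hgeq : hb v * hb (v.tail ++ m'') * g = hb m * g := by
      have h' := SSS.hbA1 k hb hb1 hb2 v m''
      have hne1 : v.length - k = 1 := by omega
      rw [hne1, List.drop_one] at h'
      rw [← h', ← hsplit]
    rw [hgeq] at h5
    exact Cong.congr rfl (by rw [← hdlt])
      (((h1.trans h2).trans h3).trans (h4.trans h5))

include hpres hrepne hrep hk hb1 hb2 in
theorem congF' (m : List A) (g : G) (hm : k ≤ m.length) :
    Cong (RelR' (Lk A k) RG hb rep k)
      (wG (rep g) ++ wA m) (wG (rep (g * hb m)) ++ wA (m.drop (m.length - k))) := by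
  rcases eq_or_lt_of_le hm with heq | hlt
  · have hdk : m.length - k = 0 := by omega
    have hg : g * hb m = g := by rw [hb1 m (by omega), mul_one]
    rw [hdk, List.drop_zero, hg]
    exact Cong.refl _
  · set m'' := m.take (m.length - (k+1)) with hm''
    set v := m.drop (m.length - (k+1)) with hv
    have hvlen : v.length = k + 1 := by simp [hv]; omega
    have hsplit : m = m'' ++ v := (List.take_append_drop _ _).symm
    have hdl : v.dropLast.length = k := by simp [hvlen]
    have hdlne : v.dropLast ≠ [] := by
      intro h; have := congrArg List.length h; simp [hdl] at this; omega
    have hvd : v ∈ Ddot (Lk A k) := by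
      have : v = v.take (k+1) := by rw [List.take_of_length_le (by omega)]
      rw [this]
      exact take_ddot hk (by omega)
    have rv : Cong (RelR' (Lk A k) RG hb rep k) (wA v)
        (wA v.dropLast ++ wG (rep (hb v)) ++ wA v.tail) :=
      Cong.of (Or.inl (RelR.rV hvd))
    have h1 : Cong (RelR' (Lk A k) RG hb rep k)
        (wG (rep g) ++ wA m)
        (wG (rep g) ++ (wA m'' ++ (wA v.dropLast ++ (wG (rep (hb v)) ++ wA v.tail)))) :=
      Cong.midA (wG (rep g) ++ wA m'') [] rv
        (by rw [hsplit]; simp [List.append_assoc]) (by simp [List.append_assoc])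
    have h2 : Cong (RelR' (Lk A k) RG hb rep k)
        (wG (rep g) ++ (wA m'' ++ (wA v.dropLast ++ (wG (rep (hb v)) ++ wA v.tail))))
        (wG (rep g) ++ (wG (rep 1) ++ (wA m'' ++ (wA v.dropLast ++
          (wG (rep (hb v)) ++ wA v.tail))))) :=
      Cong.midA [] (wA m'' ++ wA v.dropLast ++ wG (rep (hb v)) ++ wA v.tail)
        (cong_repe_r hpres hrepne hrep g)
        (by simp [List.append_assoc]) (by simp [List.append_assoc])
    have h3 : Cong (RelR' (Lk A k) RG hb rep k)
        (wG (rep g) ++ (wG (rep 1) ++ (wA m'' ++ (wA v.dropLast ++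
          (wG (rep (hb v)) ++ wA v.tail)))))
        (wG (rep g) ++ (wG (rep 1) ++ (wA m'' ++ (wA v.dropLast ++
          (wG (rep 1) ++ (wG (rep (hb v)) ++ wA v.tail)))))) :=
      Cong.midA (wG (rep g) ++ wG (rep 1) ++ wA m'' ++ wA v.dropLast) (wA v.tail)
        (cong_repe_l hpres hrepne hrep (hb v))
        (by simp [List.append_assoc]) (by simp [List.append_assoc])
    have h4 : Cong (RelR' (Lk A k) RG hb rep k)
        (wG (rep g) ++ (wG (rep 1) ++ (wA m'' ++ (wA v.dropLast ++
          (wG (rep 1) ++ (wG (rep (hb v)) ++ wA v.tail))))))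
        (wG (rep g) ++ (wG (rep (hb (m'' ++ v.dropLast))) ++
          (wG (rep (hb v)) ++ wA v.tail))) :=
      Cong.midA (wG (rep g)) (wG (rep (hb v)) ++ wA v.tail)
        (congEUE hpres hrepne hrep hk hb1 hb2 (m'' ++ v.dropLast).length _ le_rfl
          (by simp [hdlne]))
        (by simp [List.append_assoc]) (by simp [List.append_assoc])
    have h5 : Cong (RelR' (Lk A k) RG hb rep k)
        (wG (rep g) ++ (wG (rep (hb (m'' ++ v.dropLast))) ++
          (wG (rep (hb v)) ++ wA v.tail)))
        (wG (rep (g * hb (m'' ++ v.dropLast) * hb v)) ++ wA v.tail) :=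
      Cong.midA [] (wA v.tail)
        (cong_rep_mul3 hpres hrepne hrep g (hb (m'' ++ v.dropLast)) (hb v))
        (by simp [List.append_assoc]) (by simp [List.append_assoc])
    have htlt : v.tail = m.drop (m.length - k) := by
      rw [hv, List.tail_drop]
      congr 1
      omega
    have hgeq : g * hb (m'' ++ v.dropLast) * hb v = g * hb m := by
      have h' := SSS.hbA2 k hb hb1 hb2 m'' v
      have : v.take k = v.dropLast := by
        rw [List.dropLast_eq_take, hvlen, Nat.add_sub_cancel]
      rw [this] at h'
      rw [mul_assoc, ← h', ← hsplit]
    rw [hgeq] at h5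
    exact Cong.congr rfl (by rw [← htlt])
      (((h1.trans h2).trans h3).trans (h4.trans h5))

include hpres hrepne hrep hk hb1 hb2 in
theorem congG (m : List A) (hm : k ≤ m.length) :
    Cong (RelR' (Lk A k) RG hb rep k)
      (wA m) (wA (m.take k) ++ wG (rep (hb m)) ++ wA (m.drop (m.length - k))) := by
  have hulen : (m.take k).length = k := by simp; omega
  have ueu : Cong (RelR' (Lk A k) RG hb rep k) (wA (m.take k))
      (wA (m.take k) ++ wG (rep 1) ++ wA (m.take k)) :=
    Cong.of (Or.inr ⟨m.take k, hulen, rfl, rfl⟩)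
  have h1 : Cong (RelR' (Lk A k) RG hb rep k)
      (wA m)
      (wA (m.take k) ++ (wG (rep 1) ++ wA m)) :=
    Cong.midA [] (wA (m.drop k)) ueu
      (by simp [← List.map_append]) (by simp [List.append_assoc, ← List.map_append])
  have h2 : Cong (RelR' (Lk A k) RG hb rep k)
      (wA (m.take k) ++ (wG (rep 1) ++ wA m))
      (wA (m.take k) ++ (wG (rep (1 * hb m)) ++ wA (m.drop (m.length - k)))) :=
    Cong.midA (wA (m.take k)) [] (congF' hpres hrepne hrep hk hb1 hb2 m 1 hm)
      (by simp [List.append_assoc]) (by simp [List.append_assoc])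
  rw [one_mul] at h2
  exact Cong.congr rfl (by simp [List.append_assoc]) (h1.trans h2)

end CongLems2
namespace PhiInv
open SSS SSS2

variable {A : Type*} {G : Type*} {A_G : Type*} [Group G]
variable (k : ℕ) (hb : List A → G) (evA : A_G → G)

def PhiA (u : List A) : List A ⊕ (List A × G × List A) :=
  if u.length < k then .inl u else .inr (u.take k, hb u, u.drop (u.length - k))

def letT : A ⊕ A_G → List A ⊕ (List A × G × List A)
  | .inl a => PhiA k hb [a]
  | .inr b => .inr ([], evA b, [])

def sstar1 : Option (List A ⊕ (List A × G × List A)) →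
    Option (List A ⊕ (List A × G × List A)) →
    Option (List A ⊕ (List A × G × List A))
  | none, t => t
  | some a, none => some a
  | some a, some b => some (sstar k hb a b)

def Phi (w : List (A ⊕ A_G)) : Option (List A ⊕ (List A × G × List A)) :=
  w.foldr (fun x t => sstar1 k hb (some (letT k hb evA x)) t) none

variable (hb1 : ∀ w : List A, w.length ≤ k → hb w = 1)
variable (hb2 : ∀ u v : List A, u ≠ [] → v ≠ [] →
      hb (u ++ v) = hb u * hb (u.drop (u.length - k) ++ v) ∧
      hb (u ++ v) = hb (u ++ v.take k) * hb v)

include hb1 hb2 in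
theorem sstar1_assoc (x y z : Option (List A ⊕ (List A × G × List A))) :
    sstar1 k hb (sstar1 k hb x y) z = sstar1 k hb x (sstar1 k hb y z) := by
  rcases x with _ | a <;> rcases y with _ | b <;> rcases z with _ | c <;>
    simp only [sstar1]
  exact congrArg some (sstar_assoc k hb hb1 hb2 a b c)

theorem Phi_nil : Phi k hb evA [] = none := rfl

theorem Phi_cons (x : A ⊕ A_G) (w : List (A ⊕ A_G)) :
    Phi k hb evA (x :: w) = sstar1 k hb (some (letT k hb evA x)) (Phi k hb evA w) :=
  rfl

include hb1 hb2 in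
theorem Phi_append (u v : List (A ⊕ A_G)) :
    Phi k hb evA (u ++ v) = sstar1 k hb (Phi k hb evA u) (Phi k hb evA v) := by
  induction u with
  | nil => rfl
  | cons x u ih =>
    rw [List.cons_append, Phi_cons, ih, Phi_cons, sstar1_assoc k hb hb1 hb2]

include hb1 hb2 in
theorem sstar_PhiA {u v : List A} (hu : u ≠ []) (hv : v ≠ []) :
    sstar k hb (PhiA k hb u) (PhiA k hb v) = PhiA k hb (u ++ v) := by
  have hul : 1 ≤ u.length := List.length_pos_iff.mpr hu
  have hvl : 1 ≤ v.length := List.length_pos_iff.mpr hv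
  by_cases hcu : u.length < k <;> by_cases hcv : v.length < k
  · simp only [PhiA, if_pos hcu, if_pos hcv, sstar, List.length_append]
  · simp only [PhiA, if_pos hcu, if_neg hcv, sstar,
      if_neg (show ¬ (u ++ v).length < k by simp only [List.length_append]; omega)]
    refine congrArg _ (Prod.ext ?_ (Prod.ext ?_ ?_)) <;> simp only
    · rw [itk_lem]
    · rw [← hbA2 k hb hb1 hb2]
    · rw [drop_long k u (by omega)]
  · simp only [PhiA, if_neg hcu, if_pos hcv, sstar,
      if_neg (show ¬ (u ++ v).length < k by simp only [List.length_append]; omega)]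
    refine congrArg _ (Prod.ext ?_ (Prod.ext ?_ ?_)) <;> simp only
    · rw [take_long k v (by omega)]
    · rw [← hbA1 k hb hb1 hb2]
    · rw [ttk_lem]
  · simp only [PhiA, if_neg hcu, if_neg hcv, sstar,
      if_neg (show ¬ (u ++ v).length < k by simp only [List.length_append]; omega)]
    refine congrArg _ (Prod.ext ?_ (Prod.ext ?_ ?_)) <;> simp only
    · rw [take_long k v (by omega)]
    · rw [mul_assoc, ← hbA2 k hb hb1 hb2, ← hbA1 k hb hb1 hb2]
    · rw [drop_long k u (by omega)]

include hb1 hb2 in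
theorem Phi_inl {u : List A} (hu : u ≠ []) :
    Phi k hb evA (u.map Sum.inl) = some (PhiA k hb u) := by
  induction u with
  | nil => exact absurd rfl hu
  | cons a t ih =>
    rcases eq_or_ne t [] with rfl | ht
    · rfl
    · rw [List.map_cons, Phi_cons, ih ht]
      show sstar1 k hb (some (PhiA k hb [a])) (some (PhiA k hb t)) = _
      rw [show sstar1 k hb (some (PhiA k hb [a])) (some (PhiA k hb t)) =
        some (sstar k hb (PhiA k hb [a]) (PhiA k hb t)) from rfl,
        sstar_PhiA k hb hb1 hb2 (by simp) ht]
      rfl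

include hb1 in
theorem Phi_inr {u : List A_G} (hu : u ≠ []) :
    Phi k hb evA (u.map Sum.inr) =
      some (.inr (([] : List A), evalW evA u, ([] : List A))) := by
  induction u with
  | nil => exact absurd rfl hu
  | cons a t ih =>
    rcases eq_or_ne t [] with rfl | ht
    · simp [Phi, sstar1, letT, evalW]
    · rw [List.map_cons, Phi_cons, ih ht]
      have hstep : sstar1 k hb (some (letT k hb evA (Sum.inr a)))
          (some (Sum.inr (([] : List A), evalW evA t, ([] : List A)))) =
          some (sstar k hb (Sum.inr ([], evA a, []))
            (Sum.inr ([], evalW evA t, []))) := rfl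
      rw [hstep]
      simp only [sstar, List.append_nil, List.nil_append, hb1 [] (by simp), mul_one]
      simp [evalW]

end PhiInv
namespace PhiInv
open SSS SSS2

section Invariance
variable {A : Type*} {G : Type*} {A_G : Type*} [Group G]
variable {k : ℕ} {RG : List A_G → List A_G → Prop} {evA : A_G → G}
variable {rep : G → List A_G} {hb : List A → G}
variable (hk : 1 ≤ k)
variable (hRGne : ∀ u v : List A_G, RG u v → u ≠ [] ∧ v ≠ [])
variable (hpres : ∀ u v : List A_G, u ≠ [] → v ≠ [] →
      (Cong RG u v ↔ evalW evA u = evalW evA v))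
variable (hrepne : ∀ g : G, rep g ≠ []) (hrep : ∀ g : G, evalW evA (rep g) = g)
variable (hb1 : ∀ w : List A, w.length ≤ k → hb w = 1)
variable (hb2 : ∀ u v : List A, u ≠ [] → v ≠ [] →
      hb (u ++ v) = hb u * hb (u.drop (u.length - k) ++ v) ∧
      hb (u ++ v) = hb (u ++ v.take k) * hb v)

theorem ddot_len {v : List A} (hv : v ∈ Ddot (Lk A k)) : v.length = k + 1 := by
  obtain ⟨h1, ⟨h2, h3⟩, -⟩ := hv
  have h2' : 0 < v.dropLast.length := List.length_pos_iff.mpr h2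
  simp only [List.length_dropLast] at h2' h3
  by_contra hne
  exact h1 ⟨by intro h; rw [h] at h2'; simp at h2', by omega⟩

include hrepne hrep hb1 in
theorem Phi_rep (g : G) :
    Phi k hb evA ((rep g).map Sum.inr) = some (.inr (([] : List A), g, ([] : List A))) := by
  rw [Phi_inr k hb evA hb1 (hrepne g), hrep g]

include hb1 in
theorem PhiA_len_k (hkk : 1 ≤ k) {u : List A} (h : u.length = k) :
    PhiA k hb u = .inr (u, hb u, u) := by
  rw [PhiA, if_neg (by omega), List.take_of_length_le (by omega), h,
    Nat.sub_self, List.drop_zero]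

include hk hRGne hpres hrepne hrep hb1 hb2 in
theorem phi_invariant {x y : List (A ⊕ A_G)}
    (h : Cong (RelR' (Lk A k) RG hb rep k) x y) :
    Phi k hb evA x = Phi k hb evA y := by
  induction h with
  | refl u => rfl
  | symm _ ih => exact ih.symm
  | trans _ _ ih1 ih2 => exact ih1.trans ih2
  | left w _ ih => rw [Phi_append k hb evA hb1 hb2, Phi_append k hb evA hb1 hb2, ih]
  | right w _ ih => rw [Phi_append k hb evA hb1 hb2, Phi_append k hb evA hb1 hb2, ih]
  | of hrel =>
    rcases hrel with hrel | ⟨u, hul, rfl, rfl⟩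
    · cases hrel with
      | ofG h' =>
        obtain ⟨hu, hv⟩ := hRGne _ _ h'
        rw [Phi_inr k hb evA hb1 hu, Phi_inr k hb evA hb1 hv,
          (hpres _ _ hu hv).1 (Cong.of h')]
      | rU hu =>
        rename_i u
        obtain ⟨hune, hulen⟩ := hu
        rw [Phi_append k hb evA hb1 hb2, Phi_append k hb evA hb1 hb2,
          Phi_rep hrepne hrep hb1,
          Phi_inl k hb evA hb1 hb2 hune, Phi_rep hrepne hrep hb1]
        by_cases hlt : u.length < k
        · rw [PhiA, if_pos hlt]
          show some (sstar k hb (sstar k hb _ _) _) = _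
          simp only [sstar, List.nil_append, List.append_nil]
          rw [hb1 u hulen, hb1 _ (by simp only [List.length_drop]; omega)]
          simp
        · rw [PhiA_len_k hb1 hk (by omega)]
          show some (sstar k hb (sstar k hb _ _) _) = _
          simp only [sstar, List.nil_append, List.append_nil]
          rw [hb1 u hulen]
          simp
      | rV hv =>
        rename_i v
        have hvl := ddot_len hv
        have hvne : _root_.List.length v ≠ 0 := by omega
        have hvne' : v ≠ [] := by intro h; rw [h] at hvl; simp at hvl
        have hdlne : v.dropLast ≠ [] := by
          intro h; have := congrArg List.length h; simp [hvl] at this; omega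
        have htlne : v.tail ≠ [] := by
          intro h; have := congrArg List.length h; simp [hvl] at this; omega
        rw [Phi_append k hb evA hb1 hb2, Phi_append k hb evA hb1 hb2,
          Phi_inl k hb evA hb1 hb2 hvne', Phi_inl k hb evA hb1 hb2 hdlne,
          Phi_inl k hb evA hb1 hb2 htlne, Phi_rep hrepne hrep hb1]
        rw [PhiA_len_k hb1 hk (show v.dropLast.length = k by simp [hvl]),
          PhiA_len_k hb1 hk (show v.tail.length = k by simp [hvl]),
          PhiA, if_neg (by omega)]
        show some _ = some (sstar k hb (sstar k hb _ _) _)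
        simp only [sstar, List.nil_append, List.append_nil]
        rw [hb1 v.dropLast (by simp [hvl]), hb1 v.tail (by simp [hvl])]
        simp only [one_mul, mul_one]
        congr 1
        refine congrArg _ (Prod.ext ?_ (Prod.ext rfl ?_)) <;> simp only
        · rw [List.dropLast_eq_take, hvl, Nat.add_sub_cancel]
        · rw [hvl, show k + 1 - k = 1 from by omega, List.drop_one]
    · -- UEU
      rw [Phi_append k hb evA hb1 hb2, Phi_append k hb evA hb1 hb2,
        Phi_inl k hb evA hb1 hb2 (by intro h; rw [h] at hul; simp at hul; omega),
        Phi_rep hrepne hrep hb1]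
      rw [PhiA_len_k hb1 hk hul]
      show some _ = some (sstar k hb (sstar k hb _ _) _)
      simp only [sstar, List.nil_append, List.append_nil]
      rw [hb1 u (by omega)]
      simp

end Invariance
end PhiInv
/-- The map `φ : M_k(G, ħ) → S'_k(G, f)` defined by
`φ(v, 1_G, v) = [v]` for `v ∈ A^{≤k−1}` and `φ(u₁, g, u₂) = [u₁ w_g u₂]`
for `u₁, u₂ ∈ A^k`, `g ∈ G` (where `[·]` denotes the `ρ_{R'}`-class) is an
injective semigroup homomorphism from `M_k(G, ħ)` into
`S'_k(G, f) = X⁺/ρ_{R'}`, where `f` is the restriction of the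
`k`-superposition homomorphism `ħ` to `A^{≤k+1}`. -/
theorem Mk_embeds_in_S'k [Nonempty A] [Group G] [Finite G]
    (k : ℕ) (hk : 1 ≤ k)
    (RG : List A_G → List A_G → Prop) (evA : A_G → G)
    (hRGne : ∀ u v : List A_G, RG u v → u ≠ [] ∧ v ≠ [])
    (hpres : ∀ u v : List A_G, u ≠ [] → v ≠ [] →
      (Cong RG u v ↔ evalW evA u = evalW evA v))
    (rep : G → List A_G) (hrepne : ∀ g : G, rep g ≠ [])
    (hrep : ∀ g : G, evalW evA (rep g) = g)
    -- ħ is a k-superposition homomorphism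
    (hb : List A → G)
    (hb1 : ∀ w : List A, w.length ≤ k → hb w = 1)
    (hb2 : ∀ u v : List A, u ≠ [] → v ≠ [] →
      hb (u ++ v) = hb u * hb (u.drop (u.length - k) ++ v) ∧
      hb (u ++ v) = hb (u ++ v.take k) * hb v) :
    -- M_k(G, ħ) is closed under its multiplication
    (∀ p q : List A × G × List A, memM k p → memM k q → memM k (mulM k hb p q)) ∧
    -- φ is a semigroup homomorphism into S'_k(G, f)
    (∀ p q : List A × G × List A, memM k p → memM k q →
      Cong (RelR' (Lk A k) RG hb rep k)
        (phiWord k rep p ++ phiWord k rep q) (phiWord k rep (mulM k hb p q))) ∧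
    -- φ is injective
    (∀ p q : List A × G × List A, memM k p → memM k q →
      Cong (RelR' (Lk A k) RG hb rep k) (phiWord k rep p) (phiWord k rep q) →
      p = q) := by
  refine ⟨?_, ?_, ?_⟩
  · -- closure
    rintro ⟨p1, pg, p2⟩ ⟨q1, qg, q2⟩ hp hq
    simp only [memM] at hp hq
    simp only [memM, mulM]
    rcases hp with ⟨hpg, hpe, hpne, hpl⟩ | ⟨hp1, hp2⟩ <;>
      rcases hq with ⟨hqg, hqe, hqne, hql⟩ | ⟨hq1, hq2⟩
    · -- short short (p1 ↦ p2, q1 ↦ q2)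
      subst hpg hqg hpe hqe
      have hp1' : 1 ≤ p2.length := List.length_pos_iff.mpr hpne
      have hq1' : 1 ≤ q2.length := List.length_pos_iff.mpr hqne
      by_cases hc : (p2 ++ q2).length ≤ k - 1
      · left
        have hlt : (p2 ++ q2).length ≤ k := by omega
        refine ⟨?_, ?_, ?_, ?_⟩
        · simp only [hb1 _ hlt, one_mul, mul_one]
        · simp only [Nat.sub_eq_zero_of_le hlt, List.drop_zero,
            List.take_of_length_le (by omega : (p2 ++ q2).length ≤ k)]
        · simp only [List.take_of_length_le (by omega : (p2 ++ q2).length ≤ k)]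
          simp [hpne]
        · simp only [List.length_take, List.length_append]
          simp only [List.length_append] at hc
          omega
      · right
        constructor
        · simp only [List.length_take]
          simp only [List.length_append] at *
          omega
        · simp only [List.length_drop, List.length_append] at *
          omega
    · subst hpg hpe
      right
      constructor
      · simp only [List.length_take, List.length_append]; omega
      · simp only [List.length_drop, List.length_append]; omega
    · subst hqg hqe
      have hq1' : 1 ≤ q2.length := List.length_pos_iff.mpr hqne
      right
      constructor
      · simp only [List.length_take, List.length_append]; omega
      · simp only [List.length_drop, List.length_append]; omega
    · right
      constructor
      · simp only [List.length_take, List.length_append]; omega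
      · simp only [List.length_drop, List.length_append]; omega
  · -- homomorphism
    rintro ⟨p1, pg, p2⟩ ⟨q1, qg, q2⟩ hp hq
    simp only [memM] at hp hq
    rcases hp with ⟨hpg, hpe, hpne, hpl⟩ | ⟨hp1, hp2⟩ <;>
      rcases hq with ⟨hqg, hqe, hqne, hql⟩ | ⟨hq1, hq2⟩
    · -- short short
      subst hpg hqg hpe hqe
      have hp1' : 1 ≤ p2.length := List.length_pos_iff.mpr hpne
      have hq1' : 1 ≤ q2.length := List.length_pos_iff.mpr hqne
      simp only [mulM]
      simp only [phiWord, if_pos (show p2.length < k by omega),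
        if_pos (show q2.length < k by omega)]
      by_cases hc : (p2 ++ q2).length < k
      · rw [if_pos (by simp only [List.length_take]; omega :
          ((p2 ++ q2).take k).length < k)]
        simp only [List.take_of_length_le (le_of_lt hc), ← List.map_append]
        exact Cong.refl _
      · rw [if_neg (by simp only [List.length_take]; omega :
          ¬ ((p2 ++ q2).take k).length < k)]
        simp only [one_mul, mul_one]
        exact Cong.congr (by simp) rfl
          (congG hpres hrepne hrep hk hb1 hb2 (p2 ++ q2)
            (by simp only [List.length_append] at hc ⊢; omega))
    · -- short full
      subst hpg hpe
      have hp1' : 1 ≤ p2.length := List.length_pos_iff.mpr hpne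
      simp only [mulM]
      simp only [phiWord, if_pos (show p2.length < k by omega),
        if_neg (show ¬ q1.length < k by omega)]
      rw [if_neg (by simp only [List.length_take, List.length_append]; omega :
        ¬ ((p2 ++ q1).take k).length < k)]
      simp only [one_mul]
      have hdrop : (p2 ++ q2).drop ((p2 ++ q2).length - k) = q2 :=
        List.drop_left' (by simp only [List.length_append]; omega)
      rw [hdrop]
      exact Cong.midA [] (wA q2)
        (congF hpres hrepne hrep hk hb1 hb2 (p2 ++ q1) qg
          (by simp only [List.length_append]; omega))
        (by simp [List.append_assoc]) (by simp [List.append_assoc])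
    · -- full short
      subst hqg hqe
      have hq1' : 1 ≤ q2.length := List.length_pos_iff.mpr hqne
      simp only [mulM]
      simp only [phiWord, if_neg (show ¬ p1.length < k by omega),
        if_pos (show q2.length < k by omega)]
      rw [if_neg (by simp only [List.length_take, List.length_append]; omega :
        ¬ ((p1 ++ q2).take k).length < k)]
      simp only [mul_one]
      rw [List.take_left' (by omega : p1.length = k)]
      exact Cong.midA (wA p1) []
        (congF' hpres hrepne hrep hk hb1 hb2 (p2 ++ q2) pg
          (by simp only [List.length_append]; omega))
        (by simp [List.append_assoc]) (by simp [List.append_assoc])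
    · -- full full
      simp only [mulM]
      simp only [phiWord, if_neg (show ¬ p1.length < k by omega),
        if_neg (show ¬ q1.length < k by omega)]
      rw [if_neg (by simp only [List.length_take, List.length_append]; omega :
        ¬ ((p1 ++ q1).take k).length < k)]
      rw [List.take_left' (by omega : p1.length = k),
        List.drop_left' (by simp only [List.length_append]; omega :
          p2.length = (p2 ++ q2).length - k)]
      exact Cong.midA (wA p1) (wA q2)
        (congH hpres hrepne hrep hk hb1 hb2 (p2 ++ q1) pg qg (by
          intro h; have := congrArg List.length h
          simp only [List.length_append, List.length_nil] at this; omega))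
        (by simp [List.append_assoc]) (by simp [List.append_assoc])
  · -- injectivity
    have hfull : ∀ (u1 u2 : List A) (g : G), u1.length = k → u2.length = k →
        PhiInv.Phi k hb evA (phiWord k rep (u1, g, u2)) =
          some (.inr (u1, g, u2)) := by
      intro u1 u2 g h1 h2
      have h1ne : u1 ≠ [] := by intro h; rw [h] at h1; simp at h1; omega
      have h2ne : u2 ≠ [] := by intro h; rw [h] at h2; simp at h2; omega
      simp only [phiWord, if_neg (show ¬ u1.length < k by omega)]
      rw [PhiInv.Phi_append k hb evA hb1 hb2, PhiInv.Phi_append k hb evA hb1 hb2,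
        PhiInv.Phi_inl k hb evA hb1 hb2 h1ne, PhiInv.Phi_inl k hb evA hb1 hb2 h2ne,
        PhiInv.Phi_rep hrepne hrep hb1,
        PhiInv.PhiA_len_k hb1 hk h1, PhiInv.PhiA_len_k hb1 hk h2]
      show some (SSS.sstar k hb (SSS.sstar k hb _ _) _) = _
      simp only [SSS.sstar, List.nil_append, List.append_nil]
      rw [hb1 u1 (by omega), hb1 u2 (by omega)]
      simp
    have hshort : ∀ (v : List A) (g : G) (u2 : List A), v ≠ [] → v.length < k →
        PhiInv.Phi k hb evA (phiWord k rep (v, g, u2)) = some (.inl v) := by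
      intro v g u2 hv hlt
      simp only [phiWord, if_pos (show v.length < k from hlt)]
      rw [PhiInv.Phi_inl k hb evA hb1 hb2 hv, PhiInv.PhiA, if_pos hlt]
    rintro ⟨p1, pg, p2⟩ ⟨q1, qg, q2⟩ hp hq hcong
    have hphi := PhiInv.phi_invariant (evA := evA) hk hRGne hpres hrepne hrep
      hb1 hb2 hcong
    simp only [memM] at hp hq
    rcases hp with ⟨hpg, hpe, hpne, hpl⟩ | ⟨hp1, hp2⟩ <;>
      rcases hq with ⟨hqg, hqe, hqne, hql⟩ | ⟨hq1, hq2⟩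
    · subst hpg hqg hpe hqe
      rw [hshort p2 1 p2 hpne (by omega), hshort q2 1 q2 hqne (by omega)] at hphi
      simp only [Option.some.injEq, Sum.inl.injEq] at hphi
      rw [hphi]
    · subst hpg hpe
      rw [hshort p2 1 p2 hpne (by omega), hfull q1 q2 qg hq1 hq2] at hphi
      simp at hphi
    · subst hqg hqe
      rw [hfull p1 p2 pg hp1 hp2, hshort q2 1 q2 hqne (by omega)] at hphi
      simp at hphi
    · rw [hfull p1 p2 pg hp1 hp2, hfull q1 q2 qg hq1 hq2] at hphi
      simp only [Option.some.injEq, Sum.inr.injEq, Prod.mk.injEq] at hphi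
      obtain ⟨h1, h2, h3⟩ := hphi
      rw [h1, h2, h3]
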